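/- Let (Ω, F, P) be a probability space, let x_0 : Ω → ℝ^d, u_1, …, u_T : Ω → ℝ^p, v_1, …, v_T : Ω → ℝ^q be random variables such that the family (x_0, u_1, …, u_T, v_1, …, v_T) is mutually independent, let f_j : ℝ^d × ℝ^p → ℝ^d and h_j : ℝ^d × ℝ^q → ℝ^m be measurable, and define x_j = f_j(x_{j−1}, u_j) and y_j = h_j(x_j, v_j) for j = 1, …, T. Then for every k with 0 ≤ k < T and every bounded measurable φ : ℝ^d → ℝ, almost surely E[φ(x_k) | σ(x_{k+1}) ⊔ σ(y_1, …, y_T)] = E[φ(x_k) | σ(x_{k+1}) ⊔ σ(y_1, …, y_k)]. -/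

import Mathlib

open MeasureTheory ProbabilityTheory Finset

/-- comap of a measurable function of a pair is below the join of the comaps. -/
lemma comap_fun_pair_le {Ω β γ δ : Type*} [mβ : MeasurableSpace β] [mγ : MeasurableSpace γ]
    [mδ : MeasurableSpace δ] {g : β × γ → δ} (hg : Measurable g) (a : Ω → β) (b : Ω → γ) :
    MeasurableSpace.comap (fun ω => g (a ω, b ω)) mδ ≤
      MeasurableSpace.comap a mβ ⊔ MeasurableSpace.comap b mγ := by
  have h1 : (fun ω : Ω => g (a ω, b ω)) = g ∘ (fun ω => (a ω, b ω)) := rfl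
  rw [h1, ← MeasurableSpace.comap_comp]
  refine le_trans (MeasurableSpace.comap_mono hg.comap_le) ?_
  have h2 : (Prod.instMeasurableSpace : MeasurableSpace (β × γ))
      = MeasurableSpace.comap Prod.fst mβ ⊔ MeasurableSpace.comap Prod.snd mγ := rfl
  rw [h2, MeasurableSpace.comap_sup, MeasurableSpace.comap_comp, MeasurableSpace.comap_comp]
  have e1 : Prod.fst ∘ (fun ω : Ω => (a ω, b ω)) = a := rfl
  have e2 : Prod.snd ∘ (fun ω : Ω => (a ω, b ω)) = b := rfl
  rw [e1, e2]

/-- If `f` is `m'`-measurable, `m₁ ≤ m'` and `m'` is independent of `m₂`, then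
`E[f | m₁ ⊔ m₂] = E[f | m₁]` a.s. -/
lemma condexp_sup_indep {Ω : Type*} {m' m₁ m₂ : MeasurableSpace Ω} [m0 : MeasurableSpace Ω]
    {P : Measure Ω} [IsFiniteMeasure P] (hm' : m' ≤ m0) (h₁' : m₁ ≤ m') (h₂ : m₂ ≤ m0)
    {f : Ω → ℝ} (hfm : StronglyMeasurable[m'] f) (hfi : Integrable f P)
    (hindep : Indep m' m₂ P) :
    P[f | m₁ ⊔ m₂] =ᵐ[P] P[f | m₁] := by
  have hm₁ : m₁ ≤ m0 := h₁'.trans hm'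
  have hsup : m₁ ⊔ m₂ ≤ m0 := sup_le hm₁ h₂
  -- the key product formula for set integrals over `A ∩ B`
  have key : ∀ ψ : Ω → ℝ, Integrable ψ P → Measurable[m'] ψ →
      ∀ A B : Set Ω, MeasurableSet[m'] A → MeasurableSet[m₂] B →
      ∫ ω in A ∩ B, ψ ω ∂P = (∫ ω in A, ψ ω ∂P) * (P B).toReal := by
    intro ψ hψi hψm A B hA hB
    have hAm0 : MeasurableSet A := hm' A hA
    have hBm0 : MeasurableSet B := h₂ B hB
    have hBm : Measurable[m₂] (B.indicator fun _ => (1 : ℝ)) := measurable_const.indicator hB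
    have hind : IndepFun (A.indicator ψ) (B.indicator fun _ => (1 : ℝ)) P := by
      rw [IndepFun_iff_Indep]
      exact indep_of_indep_of_le_right
        (indep_of_indep_of_le_left hindep (hψm.indicator hA).comap_le) hBm.comap_le
    have h1 : Integrable (A.indicator ψ) P := hψi.indicator hAm0
    have h2 : Integrable (B.indicator fun _ => (1 : ℝ)) P := (integrable_const 1).indicator hBm0
    have hmul := hind.integral_mul_eq_mul_integral h1.1 h2.1
    have heq : A.indicator ψ * B.indicator (fun _ => (1 : ℝ)) = (A ∩ B).indicator ψ := by
      funext ω
      by_cases hA' : ω ∈ A <;> by_cases hB' : ω ∈ B <;>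
        simp [Set.indicator_apply, hA', hB', Set.mem_inter_iff]
    rw [heq] at hmul
    rw [integral_indicator (hAm0.inter hBm0), integral_indicator hAm0,
      integral_indicator hBm0] at hmul
    rw [hmul]
    simp [setIntegral_const, measureReal_def]
  -- the defining property on the π-system generating `m₁ ⊔ m₂`
  have hint : ∀ s : Set Ω, MeasurableSet[m₁ ⊔ m₂] s →
      ∫ ω in s, (P[f|m₁]) ω ∂P = ∫ ω in s, f ω ∂P := by
    have hgen : (m₁ ⊔ m₂ : MeasurableSpace Ω) = MeasurableSpace.generateFrom
        {s : Set Ω | ∃ A B : Set Ω, MeasurableSet[m₁] A ∧ MeasurableSet[m₂] B ∧ s = A ∩ B} := by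
      refine le_antisymm (sup_le ?_ ?_) (MeasurableSpace.generateFrom_le ?_)
      · intro A hA
        exact MeasurableSpace.measurableSet_generateFrom
          ⟨A, Set.univ, hA, MeasurableSet.univ, by simp⟩
      · intro B hB
        exact MeasurableSpace.measurableSet_generateFrom
          ⟨Set.univ, B, MeasurableSet.univ, hB, by simp⟩
      · rintro t ⟨A, B, hA, hB, rfl⟩
        exact ((le_sup_left : m₁ ≤ m₁ ⊔ m₂) A hA).inter ((le_sup_right : m₂ ≤ m₁ ⊔ m₂) B hB)
    have hpi : IsPiSystem
        {s : Set Ω | ∃ A B : Set Ω, MeasurableSet[m₁] A ∧ MeasurableSet[m₂] B ∧ s = A ∩ B} := by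
      rintro s ⟨A, B, hA, hB, rfl⟩ t ⟨A', B', hA', hB', rfl⟩ -
      refine ⟨A ∩ A', B ∩ B', hA.inter hA', hB.inter hB', ?_⟩
      ext ω
      simp only [Set.mem_inter_iff]
      tauto
    intro s hs
    refine @MeasurableSpace.induction_on_inter Ω (m₁ ⊔ m₂)
      (fun s _ => ∫ ω in s, (P[f|m₁]) ω ∂P = ∫ ω in s, f ω ∂P) _ hgen hpi ?_ ?_ ?_ ?_ s hs
    · simp
    · rintro t ⟨A, B, hA, hB, rfl⟩
      rw [key f hfi hfm.measurable A B (h₁' A hA) hB,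
        key (P[f|m₁]) integrable_condExp (stronglyMeasurable_condExp.mono h₁').measurable
          A B (h₁' A hA) hB,
        setIntegral_condExp hm₁ hfi hA]
    · intro t htm hC
      have ht0 : MeasurableSet t := hsup t htm
      have e1 := integral_add_compl ht0 (integrable_condExp (f := f) (m := m₁) (μ := P))
      have e2 := integral_add_compl ht0 hfi
      have e3 : ∫ ω, (P[f|m₁]) ω ∂P = ∫ ω, f ω ∂P := integral_condExp hm₁
      linarith
    · intro g hdis hmeas hC
      rw [integral_iUnion (fun i => hsup _ (hmeas i)) hdis integrable_condExp.integrableOn,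
        integral_iUnion (fun i => hsup _ (hmeas i)) hdis hfi.integrableOn]
      exact tsum_congr hC
  exact (ae_eq_condExp_of_forall_setIntegral_eq hsup hfi
    (fun s _ _ => integrable_condExp.integrableOn)
    (fun s hs _ => hint s hs)
    ((stronglyMeasurable_condExp (m := m₁) (μ := P) (f := f)).mono (le_sup_left (b := m₂))).aestronglyMeasurable).symm

/-- In the state space model `x_j = f_j(x_{j−1}, u_j)`, `y_j = h_j(x_j, v_j)` with
`(x_0, u_1, …, u_T, v_1, …, v_T)` mutually independent: for `0 ≤ k < T` and
bounded measurable `φ`, almost surely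
`E[φ(x_k) | σ(x_{k+1}) ⊔ σ(y_1, …, y_T)] = E[φ(x_k) | σ(x_{k+1}) ⊔ σ(y_1, …, y_k)]`. -/
theorem stmt_11 {Ω : Type*} [MeasurableSpace Ω] (P : Measure Ω) [IsProbabilityMeasure P]
    (d p q m T : ℕ) (hd : 0 < d) (hp : 0 < p) (hq : 0 < q) (hm : 0 < m)
    (x0 : Ω → (Fin d → ℝ)) (hx0meas : Measurable x0)
    (u : ℕ → Ω → (Fin p → ℝ)) (humeas : ∀ i, Measurable (u i))
    (v : ℕ → Ω → (Fin q → ℝ)) (hvmeas : ∀ i, Measurable (v i))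
    (f : ℕ → (Fin d → ℝ) × (Fin p → ℝ) → (Fin d → ℝ)) (hf : ∀ i, Measurable (f i))
    (h : ℕ → (Fin d → ℝ) × (Fin q → ℝ) → (Fin m → ℝ)) (hh : ∀ i, Measurable (h i))
    (hindep : iIndep
      (fun i : Option (Fin T ⊕ Fin T) =>
        i.elim (MeasurableSpace.comap x0 inferInstance)
          (fun j => Sum.elim
            (fun a : Fin T => MeasurableSpace.comap (u ((a : ℕ) + 1)) inferInstance)
            (fun b : Fin T => MeasurableSpace.comap (v ((b : ℕ) + 1)) inferInstance) j)) P)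
    (x : ℕ → Ω → (Fin d → ℝ)) (hx0 : x 0 = x0)
    (hx : ∀ j, 1 ≤ j → j ≤ T → x j = fun ω => f j (x (j - 1) ω, u j ω))
    (y : ℕ → Ω → (Fin m → ℝ))
    (hy : ∀ j, 1 ≤ j → j ≤ T → y j = fun ω => h j (x j ω, v j ω))
    (k : ℕ) (hkT : k < T)
    (φ : (Fin d → ℝ) → ℝ) (hφ : Measurable φ) (hφbdd : ∃ C, ∀ w, |φ w| ≤ C) :
    P[fun ω => φ (x k ω) |
        MeasurableSpace.comap (x (k + 1)) inferInstance ⊔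
          ⨆ i ∈ Finset.Icc 1 T, MeasurableSpace.comap (y i) inferInstance]
      =ᵐ[P]
    P[fun ω => φ (x k ω) |
        MeasurableSpace.comap (x (k + 1)) inferInstance ⊔
          ⨆ i ∈ Finset.Icc 1 k, MeasurableSpace.comap (y i) inferInstance] := by
  classical
  rename_i mΩ instP
  set M : Option (Fin T ⊕ Fin T) → MeasurableSpace Ω := fun i =>
    i.elim (MeasurableSpace.comap x0 inferInstance)
      (fun j => Sum.elim
        (fun a : Fin T => MeasurableSpace.comap (u ((a : ℕ) + 1)) inferInstance)
        (fun b : Fin T => MeasurableSpace.comap (v ((b : ℕ) + 1)) inferInstance) j) with hM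
  have h_le : ∀ i, M i ≤ mΩ := by
    rintro (_ | (a | b))
    · exact hx0meas.comap_le
    · exact (humeas _).comap_le
    · exact (hvmeas _).comap_le
  set S : Set (Option (Fin T ⊕ Fin T)) :=
    {i | i.elim False (Sum.elim (fun a : Fin T => k + 1 ≤ (a : ℕ))
      (fun b : Fin T => k ≤ (b : ℕ)))} with hS
  set H : MeasurableSpace Ω := ⨆ i ∈ S, M i with hH
  set G : MeasurableSpace Ω := ⨆ i ∈ Sᶜ, M i with hG
  have hGH : Indep G H P := (indep_biSup_compl h_le hindep S).symm
  have hG_le : G ≤ mΩ := by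
    rw [hG]; exact iSup₂_le fun i _ => h_le i
  have hH_le : H ≤ mΩ := by
    rw [hH]; exact iSup₂_le fun i _ => h_le i
  -- membership of the noise σ-algebras in the two groups
  have hmem_uG : ∀ j, 1 ≤ j → j ≤ k + 1 →
      MeasurableSpace.comap (u j) inferInstance ≤ G := by
    intro j hj1 hjk
    have hjT' : j - 1 < T := by omega
    have hMe : MeasurableSpace.comap (u j) inferInstance = M (some (Sum.inl ⟨j - 1, hjT'⟩)) := by
      rw [hM]
      simp only [Option.elim, Sum.elim_inl]
      have : j - 1 + 1 = j := by omega
      rw [this]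
    rw [hMe, hG]
    refine le_biSup M ?_
    simp only [hS, Set.mem_compl_iff, Set.mem_setOf_eq, Option.elim, Sum.elim_inl]
    omega
  have hmem_vG : ∀ j, 1 ≤ j → j ≤ k →
      MeasurableSpace.comap (v j) inferInstance ≤ G := by
    intro j hj1 hjk
    have hjT' : j - 1 < T := by omega
    have hMe : MeasurableSpace.comap (v j) inferInstance = M (some (Sum.inr ⟨j - 1, hjT'⟩)) := by
      rw [hM]
      simp only [Option.elim, Sum.elim_inr]
      have : j - 1 + 1 = j := by omega
      rw [this]
    rw [hMe, hG]
    refine le_biSup M ?_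
    simp only [hS, Set.mem_compl_iff, Set.mem_setOf_eq, Option.elim, Sum.elim_inr]
    omega
  have hmem_uH : ∀ j, k + 2 ≤ j → j ≤ T →
      MeasurableSpace.comap (u j) inferInstance ≤ H := by
    intro j hj1 hjT
    have hjT' : j - 1 < T := by omega
    have hMe : MeasurableSpace.comap (u j) inferInstance = M (some (Sum.inl ⟨j - 1, hjT'⟩)) := by
      rw [hM]
      simp only [Option.elim, Sum.elim_inl]
      have : j - 1 + 1 = j := by omega
      rw [this]
    rw [hMe, hH]
    refine le_biSup M ?_
    simp only [hS, Set.mem_setOf_eq, Option.elim, Sum.elim_inl]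
    omega
  have hmem_vH : ∀ j, k + 1 ≤ j → j ≤ T →
      MeasurableSpace.comap (v j) inferInstance ≤ H := by
    intro j hj1 hjT
    have hjT' : j - 1 < T := by omega
    have hMe : MeasurableSpace.comap (v j) inferInstance = M (some (Sum.inr ⟨j - 1, hjT'⟩)) := by
      rw [hM]
      simp only [Option.elim, Sum.elim_inr]
      have : j - 1 + 1 = j := by omega
      rw [this]
    rw [hMe, hH]
    refine le_biSup M ?_
    simp only [hS, Set.mem_setOf_eq, Option.elim, Sum.elim_inr]
    omega
  -- past states and observations are `G`-measurable
  have hxG : ∀ j, j ≤ k + 1 → MeasurableSpace.comap (x j) inferInstance ≤ G := by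
    intro j
    induction j with
    | zero =>
      intro _
      rw [hx0]
      have hMe : MeasurableSpace.comap x0 inferInstance = M none := rfl
      rw [hMe, hG]
      refine le_biSup M ?_
      simp [hS]
    | succ n ih =>
      intro hn
      rw [hx (n + 1) (by omega) (by omega)]
      simp only [Nat.add_sub_cancel]
      exact le_trans (comap_fun_pair_le (hf (n + 1)) (x n) (u (n + 1)))
        (sup_le (ih (by omega)) (hmem_uG (n + 1) (by omega) hn))
  have hyG : ∀ j, 1 ≤ j → j ≤ k → MeasurableSpace.comap (y j) inferInstance ≤ G := by
    intro j h1 h2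
    rw [hy j h1 (by omega)]
    exact le_trans (comap_fun_pair_le (hh j) (x j) (v j))
      (sup_le (hxG j (by omega)) (hmem_vG j h1 h2))
  -- future states and observations are `σ(x_{k+1}) ⊔ H`-measurable
  have hxH : ∀ j, k + 1 ≤ j → j ≤ T →
      MeasurableSpace.comap (x j) inferInstance ≤
        MeasurableSpace.comap (x (k + 1)) inferInstance ⊔ H := by
    intro j hj
    induction j, hj using Nat.le_induction with
    | base => intro _; exact le_sup_left
    | succ n hn ih =>
      intro hT
      rw [hx (n + 1) (by omega) hT]
      simp only [Nat.add_sub_cancel]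
      refine le_trans (comap_fun_pair_le (hf (n + 1)) (x n) (u (n + 1))) (sup_le ?_ ?_)
      · exact ih (by omega)
      · exact le_trans (hmem_uH (n + 1) (by omega) hT) le_sup_right
  have hyH : ∀ j, k + 1 ≤ j → j ≤ T →
      MeasurableSpace.comap (y j) inferInstance ≤
        MeasurableSpace.comap (x (k + 1)) inferInstance ⊔ H := by
    intro j h1 h2
    rw [hy j (by omega) h2]
    exact le_trans (comap_fun_pair_le (hh j) (x j) (v j))
      (sup_le (hxH j h1 h2) (le_trans (hmem_vH j h1 h2) le_sup_right))
  set m₁ : MeasurableSpace Ω := MeasurableSpace.comap (x (k + 1)) inferInstance ⊔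
    ⨆ i ∈ Finset.Icc 1 k, MeasurableSpace.comap (y i) inferInstance with hm₁def
  set m₂ : MeasurableSpace Ω := MeasurableSpace.comap (x (k + 1)) inferInstance ⊔
    ⨆ i ∈ Finset.Icc 1 T, MeasurableSpace.comap (y i) inferInstance with hm₂def
  have hxk1m₁ : MeasurableSpace.comap (x (k + 1)) inferInstance ≤ m₁ := by
    rw [hm₁def]; exact le_sup_left
  have hm₁G : m₁ ≤ G := by
    rw [hm₁def]
    refine sup_le (hxG (k + 1) le_rfl) (iSup₂_le fun i hi => ?_)
    rcases Finset.mem_Icc.mp hi with ⟨h1, h2⟩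
    exact hyG i h1 h2
  have hm₁₂ : m₁ ≤ m₂ := by
    rw [hm₁def, hm₂def]
    refine sup_le le_sup_left (le_trans (iSup₂_le fun i hi => ?_) le_sup_right)
    rcases Finset.mem_Icc.mp hi with ⟨h1, h2⟩
    exact le_iSup₂ (f := fun i _ => MeasurableSpace.comap (y i) inferInstance) i
      (Finset.mem_Icc.mpr ⟨h1, by omega⟩)
  have hm₂le : m₂ ≤ m₁ ⊔ H := by
    rw [hm₂def]
    refine sup_le (le_trans hxk1m₁ le_sup_left) (iSup₂_le fun i hi => ?_)
    rcases Finset.mem_Icc.mp hi with ⟨h1, h2⟩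
    by_cases hik : i ≤ k
    · refine le_trans ?_ (le_sup_left (b := H))
      rw [hm₁def]
      exact le_trans (le_iSup₂ (f := fun i _ => MeasurableSpace.comap (y i) inferInstance) i
        (Finset.mem_Icc.mpr ⟨h1, hik⟩)) le_sup_right
    · exact le_trans (hyH i (by omega) h2) (sup_le_sup_right hxk1m₁ H)
  -- properties of the integrand
  obtain ⟨C, hC⟩ := hφbdd
  have hxkG : Measurable[G] (x k) := Measurable.of_comap_le (hxG k (by omega))
  have hZmG : Measurable[G] fun ω => φ (x k ω) := hφ.comp hxkG
  have hZm : Measurable[mΩ] fun ω => φ (x k ω) := hZmG.mono hG_le le_rfl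
  have hZi : Integrable (fun ω => φ (x k ω)) P :=
    ⟨hZm.aestronglyMeasurable, HasFiniteIntegral.of_bounded (C := C)
      (Filter.Eventually.of_forall fun ω => by
        simpa [Real.norm_eq_abs] using hC (x k ω))⟩
  -- the main conditional independence step
  have hkey : P[(fun ω => φ (x k ω)) | m₁ ⊔ H] =ᵐ[P] P[(fun ω => φ (x k ω)) | m₁] :=
    condexp_sup_indep (m0 := mΩ) hG_le hm₁G hH_le hZmG.stronglyMeasurable hZi hGH
  have hm₁H_le : m₁ ⊔ H ≤ mΩ :=
    sup_le (hm₁G.trans hG_le) hH_le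
  have htower := condExp_condExp_of_le (μ := P) (f := fun ω => φ (x k ω)) hm₂le hm₁H_le
  have hcongr : P[P[(fun ω => φ (x k ω)) | m₁ ⊔ H] | m₂]
      =ᵐ[P] P[P[(fun ω => φ (x k ω)) | m₁] | m₂] := condExp_congr_ae hkey
  have hfix : P[P[(fun ω => φ (x k ω)) | m₁] | m₂] = P[(fun ω => φ (x k ω)) | m₁] :=
    condExp_of_stronglyMeasurable (hm₂le.trans hm₁H_le)
      (stronglyMeasurable_condExp.mono hm₁₂) integrable_condExp
  exact htower.symm.trans (hcongr.trans (Filter.EventuallyEq.of_eq hfix))
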